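/- For any ordered field k and any nontrivial ordered abelian group G, the Hahn series field k((G)) is closed in its real closure with respect to the order topology: every element of the real closure of k((G)) that is a limit point of k((G)) lies in k((G)). -/

import Mathlib

set_option maxHeartbeats 1000000
set_option synthInstance.maxHeartbeats 400000

/-- A linearly ordered field is real closed if every positive element is a square and every
polynomial of odd degree has a root. -/
def IsRealClosedField (R : Type*) [Field R] [LinearOrder R] [IsStrictOrderedRing R] : Prop :=
  (∀ x : R, 0 < x → ∃ y : R, y ^ 2 = x) ∧
    ∀ p : Polynomial R, Odd p.natDegree → ∃ x : R, p.eval x = 0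

section Aux

variable {k : Type*} [Field k] [LinearOrder k] [IsStrictOrderedRing k] {G : Type*}
  [AddCommGroup G] [LinearOrder G] [IsOrderedAddMonoid G]

lemma aux_order_eq {w : HahnSeries G k} {g : G} (hg : w.coeff g ≠ 0)
    (hbelow : ∀ h, h < g → w.coeff h = 0) : w.order = g := by
  rcases lt_or_eq_of_le (HahnSeries.order_le_of_coeff_ne_zero hg) with h | h
  · exact absurd (hbelow _ h)
      (HahnSeries.coeff_order_eq_zero.not.mpr (HahnSeries.ne_zero_of_coeff_ne_zero hg))
  · exact h

lemma aux_lc {w : HahnSeries G k} {g : G} (hg : 0 < w.coeff g)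
    (hbelow : ∀ h, h < g → w.coeff h = 0) : 0 < w.leadingCoeff := by
  rw [HahnSeries.leadingCoeff_eq, aux_order_eq (ne_of_gt hg) hbelow]
  exact hg

lemma aux_lc_neg {s : HahnSeries G k} (hs : s ≠ 0) :
    (-s).leadingCoeff = -s.leadingCoeff := by
  have ho : (-s).order = s.order := by
    apply aux_order_eq (g := s.order)
    · simpa [HahnSeries.coeff_neg] using HahnSeries.coeff_order_eq_zero.not.mpr hs
    · intro h hh
      simp [HahnSeries.coeff_neg, HahnSeries.coeff_eq_zero_of_lt_order hh]
  rw [HahnSeries.leadingCoeff_eq, HahnSeries.leadingCoeff_eq, ho, HahnSeries.coeff_neg]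

variable {R : Type*} [Field R] [LinearOrder R] [IsStrictOrderedRing R] {f : HahnSeries G k →+* R}
  (hord : ∀ s t : HahnSeries G k, 0 < (t - s).leadingCoeff → f s < f t)

include hord

lemma aux_lt {s t : HahnSeries G k} {g : G} (hg : 0 < (t - s).coeff g)
    (hbelow : ∀ h, h < g → (t - s).coeff h = 0) : f s < f t :=
  hord s t (aux_lc hg hbelow)

lemma aux_pos {s : HahnSeries G k} (h : 0 < s.leadingCoeff) : 0 < f s := by
  have := hord 0 s (by rwa [sub_zero])
  rwa [map_zero] at this

lemma aux_neg {s : HahnSeries G k} (h : s.leadingCoeff < 0) : f s < 0 := by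
  have hs : s ≠ 0 := by
    intro hs; rw [hs, HahnSeries.leadingCoeff_zero] at h; exact lt_irrefl 0 h
  have h2 : 0 < (0 - s).leadingCoeff := by
    rw [zero_sub, aux_lc_neg hs]; linarith
  have := hord s 0 h2
  rwa [map_zero] at this

/-- If `u` has a nonzero coefficient strictly below `m`, then `|f u|` dominates
`f (single m c)` for any `c > 0`. -/
lemma aux_big {u : HahnSeries G k} {m h : G} (hhm : h < m) (hc : u.coeff h ≠ 0)
    {c : k} (hcpos : 0 < c) :
    f (HahnSeries.single m c) < |f u| := by
  have hu : u ≠ 0 := HahnSeries.ne_zero_of_coeff_ne_zero hc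
  have hom : u.order < m := lt_of_le_of_lt (HahnSeries.order_le_of_coeff_ne_zero hc) hhm
  have hlc : u.leadingCoeff ≠ 0 := HahnSeries.leadingCoeff_ne_zero.mpr hu
  rcases lt_or_gt_of_ne hlc with hl | hl
  · -- leading coefficient negative : f (single m c) < f (-u) = - f u ≤ |f u|
    have key : f (HahnSeries.single m c) < f (-u) := by
      apply aux_lt hord (g := u.order)
      · rw [HahnSeries.coeff_sub, HahnSeries.coeff_neg,
          HahnSeries.coeff_single_of_ne (ne_of_lt hom)]
        rw [HahnSeries.leadingCoeff_eq] at hl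
        linarith
      · intro h' hh'
        rw [HahnSeries.coeff_sub, HahnSeries.coeff_neg,
          HahnSeries.coeff_single_of_ne (ne_of_lt (hh'.trans hom)),
          HahnSeries.coeff_eq_zero_of_lt_order hh']
        ring
    rw [map_neg] at key
    exact key.trans_le (neg_le_abs _)
  · -- leading coefficient positive : f (single m c) < f u ≤ |f u|
    have key : f (HahnSeries.single m c) < f u := by
      apply aux_lt hord (g := u.order)
      · rw [HahnSeries.coeff_sub, HahnSeries.coeff_single_of_ne (ne_of_lt hom)]
        rw [HahnSeries.leadingCoeff_eq] at hl
        linarith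
      · intro h' hh'
        rw [HahnSeries.coeff_sub, HahnSeries.coeff_single_of_ne (ne_of_lt (hh'.trans hom)),
          HahnSeries.coeff_eq_zero_of_lt_order hh']
        ring
    exact key.trans_le (le_abs_self _)

/-- `f` of a positive single exponent term is positive. -/
lemma aux_single_pos {g : G} {c : k} (hc : 0 < c) :
    0 < f (HahnSeries.single g c) := by
  apply aux_pos hord
  rw [HahnSeries.leadingCoeff_of_single]
  exact hc

/-- Monotonicity of singles in the exponent: if `m < g` then
`f (single g c) < f (single m c')` for positive `c'`. -/
lemma aux_single_mono {m g : G} (hmg : m < g) {c c' : k} (hc' : 0 < c') :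
    f (HahnSeries.single g c) < f (HahnSeries.single m c') := by
  apply aux_lt hord (g := m)
  · rw [HahnSeries.coeff_sub, HahnSeries.coeff_single_same,
      HahnSeries.coeff_single_of_ne (ne_of_lt hmg)]
    linarith
  · intro h hh
    rw [HahnSeries.coeff_sub, HahnSeries.coeff_single_of_ne (ne_of_lt hh),
      HahnSeries.coeff_single_of_ne (ne_of_lt (hh.trans hmg))]
    ring

end Aux

/-- For any ordered field `k` and any nontrivial ordered abelian group `G`, the Hahn field
`k((G))` (ordered by the sign of the leading coefficient) is closed in its real closure `R`
with respect to the order topology: every element of `R` which is a limit point of `k((G))`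
lies in `k((G))`. The real closure is modelled by a real closed field `R` together with an
order-preserving field embedding `f` with algebraic image. -/
theorem stmt_10 {k : Type*} [Field k] [LinearOrder k] [IsStrictOrderedRing k] {G : Type*}
    [AddCommGroup G] [LinearOrder G] [IsOrderedAddMonoid G]
    (hG : ∃ g : G, g ≠ 0)
    {R : Type*} [Field R] [LinearOrder R] [IsStrictOrderedRing R] (hR : IsRealClosedField R)
    (f : HahnSeries G k →+* R)
    (hord : ∀ s t : HahnSeries G k, 0 < (t - s).leadingCoeff → f s < f t)
    (halg : ∀ x : R, ∃ p : Polynomial (HahnSeries G k), p ≠ 0 ∧ p.eval₂ f x = 0) :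
    ∀ x : R, (∀ a b : R, a < x → x < b → ∃ s : HahnSeries G k, a < f s ∧ f s < b) →
      x ∈ Set.range f := by
  classical
  intro x hx
  obtain ⟨g₀, hg₀⟩ := hG
  set e : G := |g₀| with he_def
  have he : 0 < e := abs_pos.mpr hg₀
  -- approximants: for each g : G, an element sf g of the Hahn field within single g 1 of x
  have happrox : ∀ g : G, ∃ s : HahnSeries G k,
      x - f (HahnSeries.single g 1) < f s ∧ f s < x + f (HahnSeries.single g 1) := by
    intro g
    have hpos : 0 < f (HahnSeries.single g (1 : k)) := aux_single_pos hord one_pos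
    exact hx _ _ (by linarith) (by linarith)
  choose sf hsf1 hsf2 using happrox
  have habs : ∀ g : G, |f (sf g) - x| < f (HahnSeries.single g 1) := by
    intro g
    rw [abs_lt]
    constructor
    · have := hsf1 g; linarith
    · have := hsf2 g; linarith
  -- stabilization of coefficients
  have key : ∀ g g' h : G, h < g → h < g' → (sf g).coeff h = (sf g').coeff h := by
    intro g g' h hg hg'
    by_contra hne
    set u : HahnSeries G k := sf g - sf g' with hu_def
    have hcu : u.coeff h ≠ 0 := by
      rw [hu_def, HahnSeries.coeff_sub]
      exact sub_ne_zero.mpr hne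
    set m : G := min g g' with hm_def
    have hhm : h < m := lt_min hg hg'
    have hbig : f (HahnSeries.single m (2 : k)) < |f u| :=
      aux_big hord hhm hcu (by norm_num)
    have hfu : f u = f (sf g) - f (sf g') := by rw [hu_def, map_sub]
    have h1 : |f u| ≤ |f (sf g) - x| + |f (sf g') - x| := by
      rw [hfu]
      calc |f (sf g) - f (sf g')| = |(f (sf g) - x) - (f (sf g') - x)| := by ring_nf
        _ ≤ |f (sf g) - x| + |f (sf g') - x| := abs_sub _ _
    have hmono : ∀ g₁ : G, m ≤ g₁ → f (HahnSeries.single g₁ (1:k)) ≤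
        f (HahnSeries.single m (1:k)) := by
      intro g₁ hle
      rcases eq_or_lt_of_le hle with hc | hc
      · rw [← hc]
      · exact le_of_lt (aux_single_mono hord hc one_pos)
    have h2 : f (HahnSeries.single g (1:k)) ≤ f (HahnSeries.single m (1:k)) :=
      hmono g (min_le_left g g')
    have h3 : f (HahnSeries.single g' (1:k)) ≤ f (HahnSeries.single m (1:k)) :=
      hmono g' (min_le_right g g')
    have h4 : f (HahnSeries.single m (2 : k)) = f (HahnSeries.single m 1) +
        f (HahnSeries.single m 1) := by
      rw [← map_add]
      congr 1
      ext h'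
      by_cases hh' : h' = m <;> simp [HahnSeries.coeff_add, HahnSeries.coeff_single, hh']
      norm_num
    have := habs g
    have := habs g'
    linarith
  -- the candidate limit Hahn series
  have hYpwo : (Function.support fun h : G => (sf (h + e)).coeff h).IsPWO := by
    rw [Set.isPWO_iff_isWF, Set.isWF_iff_no_descending_seq]
    intro φ hφ hmem
    set g : G := φ 0 + e with hg_def
    have hmem' : ∀ n : ℕ, φ n ∈ (sf g).support := by
      intro n
      have hlt : φ n < g := by
        rcases Nat.eq_zero_or_pos n with hn | hn
        · rw [hn, hg_def]; exact lt_add_of_pos_right _ he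
        · exact lt_trans (lt_of_lt_of_le (hφ hn) le_rfl)
            (lt_add_of_pos_right _ he)
      have := key (φ n + e) g (φ n) (lt_add_of_pos_right _ he) hlt
      have hne := hmem n
      rw [Function.mem_support] at hne
      rw [HahnSeries.mem_support, ← this]
      exact hne
    have := (sf g).isWF_support
    rw [Set.isWF_iff_no_descending_seq] at this
    exact this φ hφ hmem'
  set Y : HahnSeries G k := ⟨fun h => (sf (h + e)).coeff h, hYpwo⟩ with hY_def
  have hYcoeff : ∀ g h : G, h < g → Y.coeff h = (sf g).coeff h := by
    intro g h hh
    exact key (h + e) g h (lt_add_of_pos_right _ he) hh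
  -- the difference x - f Y is infinitesimal with respect to the Hahn field
  have hinf : ∀ ε : HahnSeries G k, 0 < ε.leadingCoeff → |x - f Y| < f ε := by
    intro ε hε
    have hεne : ε ≠ 0 := HahnSeries.leadingCoeff_ne_zero.mp (ne_of_gt hε)
    set o : G := ε.order with ho_def
    set g : G := o + e with hg_def
    have hog : o < g := lt_add_of_pos_right _ he
    set u : HahnSeries G k := Y - sf g with hu_def
    have hub : ∀ h : G, h < g → u.coeff h = 0 := by
      intro h hh
      rw [hu_def, HahnSeries.coeff_sub, hYcoeff g h hh, sub_self]
    set c : k := |u.coeff g| + 1 with hc_def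
    have hcpos : (0:k) < c := by positivity
    -- |f u| < f (single g c)
    have hub1 : f u < f (HahnSeries.single g c) := by
      apply aux_lt hord (g := g)
      · rw [HahnSeries.coeff_sub, HahnSeries.coeff_single_same, hc_def]
        have := le_abs_self (u.coeff g); linarith
      · intro h hh
        rw [HahnSeries.coeff_sub, HahnSeries.coeff_single_of_ne (ne_of_lt hh), hub h hh]
        ring
    have hub2 : -f (HahnSeries.single g c) < f u := by
      have : f (-(HahnSeries.single g c)) < f u := by
        apply aux_lt hord (g := g)
        · rw [HahnSeries.coeff_sub, HahnSeries.coeff_neg, HahnSeries.coeff_single_same, hc_def]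
          have := neg_abs_le (u.coeff g); linarith
        · intro h hh
          rw [HahnSeries.coeff_sub, HahnSeries.coeff_neg,
            HahnSeries.coeff_single_of_ne (ne_of_lt hh), hub h hh]
          ring
      rwa [map_neg] at this
    have habsu : |f u| < f (HahnSeries.single g c) := abs_lt.mpr ⟨hub2, hub1⟩
    -- single g (c+1) < ε
    have hsm : f (HahnSeries.single g (c + 1)) < f ε := by
      apply aux_lt hord (g := o)
      · rw [HahnSeries.coeff_sub, HahnSeries.coeff_single_of_ne (ne_of_lt hog)]
        rw [HahnSeries.leadingCoeff_eq] at hε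
        linarith
      · intro h hh
        rw [HahnSeries.coeff_sub, HahnSeries.coeff_single_of_ne (ne_of_lt (hh.trans hog)),
          HahnSeries.coeff_eq_zero_of_lt_order (ho_def ▸ hh)]
        ring
    have hsum : f (HahnSeries.single g (c+1)) = f (HahnSeries.single g c) +
        f (HahnSeries.single g 1) := by
      rw [← map_add]
      congr 1
      ext h'
      by_cases hh' : h' = g <;> simp [HahnSeries.coeff_add, HahnSeries.coeff_single, hh']
    have hfu : f u = f Y - f (sf g) := by rw [hu_def, map_sub]
    have hx_bound : |x - f Y| ≤ |f u| + |f (sf g) - x| := by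
      calc |x - f Y| = |(f (sf g) - x) - (f Y - f (sf g)) - 2*(f (sf g) - x)| := by ring_nf
        _ = |-(f Y - f (sf g)) - (f (sf g) - x)| := by ring_nf
        _ ≤ |-(f Y - f (sf g))| + |f (sf g) - x| := abs_sub _ _
        _ = |f u| + |f (sf g) - x| := by rw [abs_neg, hfu]
    have := habs g
    linarith
  -- conclude x = f Y using algebraicity
  refine ⟨Y, ?_⟩
  by_contra hne
  set z : R := x - f Y with hz_def
  have hz : z ≠ 0 := sub_ne_zero.mpr (Ne.symm hne)
  have hzpos : 0 < |z| := abs_pos.mpr hz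
  have hinfz : ∀ ε : HahnSeries G k, 0 < ε.leadingCoeff → |z| < f ε := hinf
  have hz1 : |z| < 1 := by
    have h1 : (0:k) < (1 : HahnSeries G k).leadingCoeff := by
      have : (1 : HahnSeries G k) = HahnSeries.single 0 1 := rfl
      rw [this, HahnSeries.leadingCoeff_of_single]; norm_num
    have := hinfz 1 h1
    rwa [map_one] at this
  obtain ⟨p, hp0, hpz⟩ := halg z
  set n : ℕ := p.natDegree with hn_def
  set m : ℕ := p.natTrailingDegree with hm_def
  have hmn : m ≤ n := Polynomial.natTrailingDegree_le_natDegree p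
  have ham : p.coeff m ≠ 0 := by
    have := Polynomial.trailingCoeff_nonzero_iff_nonzero.mpr hp0
    rwa [Polynomial.trailingCoeff] at this
  -- expand eval₂
  have hexp : (0:R) = ∑ i ∈ Finset.range (n + 1), f (p.coeff i) * z ^ i := by
    rw [← Polynomial.eval₂_eq_sum_range, hpz]
  have hsplit : (0:R) = f (p.coeff m) * z ^ m +
      ∑ i ∈ Finset.Ico (m+1) (n+1), f (p.coeff i) * z ^ i := by
    rw [hexp, Finset.range_eq_Ico,
      ← Finset.sum_Ico_consecutive _ (Nat.zero_le m) (by omega : m ≤ n + 1)]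
    have hlow : ∑ i ∈ Finset.Ico 0 m, f (p.coeff i) * z ^ i = 0 := by
      apply Finset.sum_eq_zero
      intro i hi
      rw [Finset.mem_Ico] at hi
      rw [Polynomial.coeff_eq_zero_of_lt_natTrailingDegree hi.2, map_zero, zero_mul]
    rw [hlow, zero_add, Finset.sum_eq_sum_Ico_succ_bot (Nat.lt_succ_of_le hmn)]
  set Q : R := ∑ i ∈ Finset.Ico (m+1) (n+1), f (p.coeff i) * z ^ i with hQ_def
  have hQeq : f (p.coeff m) * z ^ m = -Q := by linarith [hsplit]
  set S : R := ∑ i ∈ Finset.Ico (m+1) (n+1), |f (p.coeff i)| with hS_def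
  have hQle : |Q| ≤ S * |z| ^ (m+1) := by
    calc |Q| ≤ ∑ i ∈ Finset.Ico (m+1) (n+1), |f (p.coeff i) * z ^ i| :=
          Finset.abs_sum_le_sum_abs _ _
      _ ≤ ∑ i ∈ Finset.Ico (m+1) (n+1), |f (p.coeff i)| * |z| ^ (m+1) := by
          apply Finset.sum_le_sum
          intro i hi
          rw [Finset.mem_Ico] at hi
          rw [abs_mul, abs_pow]
          exact mul_le_mul_of_nonneg_left
            (pow_le_pow_of_le_one (abs_nonneg z) hz1.le hi.1) (abs_nonneg _)
      _ = S * |z| ^ (m+1) := by rw [hS_def, Finset.sum_mul]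
  have hA : |f (p.coeff m)| * |z| ^ m ≤ S * |z| ^ (m+1) := by
    calc |f (p.coeff m)| * |z| ^ m = |f (p.coeff m) * z ^ m| := by rw [abs_mul, abs_pow]
      _ = |Q| := by rw [hQeq, abs_neg]
      _ ≤ S * |z| ^ (m+1) := hQle
  have hApos : 0 < |f (p.coeff m)| := by
    rw [abs_pos]
    intro hfa
    have hlc := HahnSeries.leadingCoeff_ne_zero.mpr ham
    rcases lt_or_gt_of_ne hlc with hl | hl
    · exact absurd hfa (ne_of_lt (aux_neg hord hl))
    · exact absurd hfa (ne_of_gt (aux_pos hord hl))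
  have hcancel : |f (p.coeff m)| ≤ S * |z| := by
    have hzm : (0:R) < |z| ^ m := pow_pos hzpos m
    have : |f (p.coeff m)| * |z| ^ m ≤ (S * |z|) * |z| ^ m := by
      calc |f (p.coeff m)| * |z| ^ m ≤ S * |z| ^ (m+1) := hA
        _ = (S * |z|) * |z| ^ m := by ring
    exact le_of_mul_le_mul_right this hzm
  -- dominate S by the image of a Hahn series
  set b : ℕ → HahnSeries G k := fun i =>
    if 0 ≤ (p.coeff i).leadingCoeff then p.coeff i else -(p.coeff i) with hb_def
  have hfb : ∀ i : ℕ, f (b i) = |f (p.coeff i)| := by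
    intro i
    rcases lt_trichotomy ((p.coeff i).leadingCoeff) 0 with hl | hl | hl
    · rw [hb_def]
      simp only [not_le.mpr hl, if_false]
      rw [map_neg, abs_of_neg (aux_neg hord hl)]
    · have : p.coeff i = 0 := HahnSeries.leadingCoeff_eq_zero.mp hl
      rw [hb_def]
      simp [this]
    · rw [hb_def]
      simp only [le_of_lt hl, if_true]
      rw [abs_of_pos (aux_pos hord hl)]
  have hblc : ∀ i : ℕ, p.coeff i ≠ 0 → 0 < (b i).leadingCoeff := by
    intro i hi
    have hlc := HahnSeries.leadingCoeff_ne_zero.mpr hi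
    rcases lt_or_gt_of_ne hlc with hl | hl
    · rw [hb_def]
      simp only [not_le.mpr hl, if_false]
      rw [aux_lc_neg hi]
      linarith
    · rw [hb_def]
      simp only [le_of_lt hl, if_true]
      exact hl
  set cK : HahnSeries G k := ∑ i ∈ Finset.Ico (m+1) (n+1), b i with hcK_def
  have hfc : f cK = S := by
    rw [hcK_def, map_sum, hS_def]
    exact Finset.sum_congr rfl fun i _ => hfb i
  -- S must be positive (else contradiction immediately)
  have hSpos : 0 < S := by
    rcases lt_trichotomy S 0 with h | h | h
    · exfalso
      have : S * |z| ≤ 0 := mul_nonpos_of_nonpos_of_nonneg h.le (abs_nonneg z)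
      linarith
    · exfalso
      rw [h, zero_mul] at hcancel
      linarith
    · exact h
  have hcKne : cK ≠ 0 := by
    intro h
    rw [h, map_zero] at hfc
    linarith
  -- choose a large exponent g so that single g 1 * cK is below b m
  have hbm : 0 < (b m).leadingCoeff := hblc m ham
  have hbmne : b m ≠ 0 := HahnSeries.leadingCoeff_ne_zero.mp (ne_of_gt hbm)
  set o : G := (b m).order with ho_def
  set g : G := o - cK.order + e with hg_def
  have hcoeff_shift : ∀ h : G, (HahnSeries.single g (1:k) * cK).coeff (h + g) = cK.coeff h := by
    intro h
    rw [HahnSeries.coeff_single_mul_add, one_mul]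
  have hshift_small : ∀ h : G, h ≤ o → (HahnSeries.single g (1:k) * cK).coeff h = 0 := by
    intro h hh
    have h' := hcoeff_shift (h - g)
    have hsub : h - g + g = h := by abel
    rw [hsub] at h'
    rw [h']
    apply HahnSeries.coeff_eq_zero_of_lt_order
    have h1 : h - g ≤ o - g := sub_le_sub_right hh g
    have h2 : o - g = cK.order - e := by rw [hg_def]; abel
    exact lt_of_le_of_lt (h1.trans_eq h2) (sub_lt_self _ he)
  have hlt1 : f (HahnSeries.single g 1 * cK) < f (b m) := by
    apply aux_lt hord (g := o)
    · rw [HahnSeries.coeff_sub, hshift_small o le_rfl]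
      rw [HahnSeries.leadingCoeff_eq, ← ho_def] at hbm
      linarith
    · intro h hh
      rw [HahnSeries.coeff_sub, hshift_small h hh.le,
        HahnSeries.coeff_eq_zero_of_lt_order (ho_def ▸ hh)]
      ring
  -- final contradiction
  have hzlt : |z| < f (HahnSeries.single g 1) :=
    hinfz _ (by rw [HahnSeries.leadingCoeff_of_single]; norm_num)
  have hfinal : S * |z| < f (HahnSeries.single g 1 * cK) := by
    rw [map_mul, hfc]
    calc S * |z| < S * f (HahnSeries.single g 1) := by
          exact mul_lt_mul_of_pos_left hzlt hSpos
      _ = f (HahnSeries.single g 1) * S := mul_comm _ _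
  have : |f (p.coeff m)| < f (b m) := lt_of_le_of_lt hcancel (hfinal.trans hlt1)
  rw [hfb m] at this
  exact lt_irrefl _ this
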